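/- For a continuous action of a finitely generated free group or monoid G on a compact metric space X, and any x ∈ X and infinite (reduced) word w, the set ω_{F_w}(x) = ⋂_{n∈ℕ} cl{f_u(x) : u|_n = w|_n} is invariant under every f_s for s a generator (or generator inverse). -/

import Mathlib

/-- Reduced words over the alphabet `S` of generators and inverses (`ι` = formal inverse). -/
def Reduced {S : Type*} (ι : S → S) (l : List S) : Prop :=
  l.Chain' (fun a b => b ≠ ι a)

/-- The action of a word `l` on `x`: `f_{uv} = f_v ∘ f_u`. -/
def act {S X : Type*} (f : S → X → X) (l : List S) (x : X) : X :=
  l.foldl (fun y s => f s y) x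

/-- `ω_{F_w}(x) = ⋂ₙ cl { f_u(x) : u|ₙ = w|ₙ }`, the intersection over `n` of the closures
of the images of `x` under reduced words agreeing with `w` on their first `n` letters. -/
def omegaFW {S X : Type*} [MetricSpace X] (ι : S → S) (f : S → X → X)
    (w : ℕ → S) (x : X) : Set X :=
  ⋂ n : ℕ, closure {y | ∃ l : List S, Reduced ι l ∧ (∀ k < n, l[k]? = some (w k)) ∧
    y = act f l x}

/-- `ω_{F_w}(x)` is invariant under every `f_s`. -/
theorem omegaFW_invariant {S X : Type*} [Fintype S]
    [MetricSpace X] [CompactSpace X]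
    (ι : S → S) (hι : ∀ s, ι (ι s) = s) (hιne : ∀ s, ι s ≠ s)
    (f : S → X → X) (hcont : ∀ s, Continuous (f s))
    (hinv : ∀ s y, f (ι s) (f s y) = y)
    (w : ℕ → S) (hw : ∀ n, w (n + 1) ≠ ι (w n)) (x : X) :
    ∀ y ∈ omegaFW ι f w x, ∀ s : S, f s y ∈ omegaFW ι f w x := by
  intro y hy s
  simp only [omegaFW, Set.mem_iInter] at hy ⊢
  intro n
  have hy' := hy (n + 1)
  set A := {y | ∃ l : List S, Reduced ι l ∧ (∀ k < n + 1, l[k]? = some (w k)) ∧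
    y = act f l x}
  set B := {y | ∃ l : List S, Reduced ι l ∧ (∀ k < n, l[k]? = some (w k)) ∧
    y = act f l x}
  have hsub : f s '' A ⊆ B := by
    rintro _ ⟨z, ⟨l, hred, hagree, rfl⟩, rfl⟩
    obtain ⟨hlen, -⟩ := List.getElem?_eq_some_iff.mp (hagree n (Nat.lt_succ_self n))
    have hne : l ≠ [] := List.ne_nil_of_length_pos (by omega)
    by_cases hlast : l.getLast hne = ι s
    · -- cancel: use l.dropLast
      have hl : l.dropLast ++ [l.getLast hne] = l := List.dropLast_append_getLast hne
      have hdlen : n ≤ l.dropLast.length := by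
        have := List.length_dropLast (xs := l)
        omega
      refine ⟨l.dropLast, ?_, ?_, ?_⟩
      · exact hred.prefix (List.dropLast_prefix l)
      · intro k hk
        have h1 := hagree k (Nat.lt_succ_of_lt hk)
        have h2 : l[k]? = l.dropLast[k]? := by
          conv_lhs => rw [← hl]
          exact List.getElem?_append_left (lt_of_lt_of_le hk hdlen)
        rw [← h2]; exact h1
      · have : act f l x = f (ι s) (act f l.dropLast x) := by
          conv_lhs => rw [← hl]
          simp [act, List.foldl_append, hlast]
        rw [this]
        have h3 := hinv (ι s) (act f l.dropLast x)
        rw [hι] at h3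
        exact h3
    · -- extend: use l ++ [s]
      refine ⟨l ++ [s], ?_, ?_, ?_⟩
      · refine List.isChain_append.mpr ⟨hred, List.isChain_singleton s, ?_⟩
        intro a ha b hb
        simp only [List.head?_cons, Option.mem_def, Option.some.injEq] at hb
        subst hb
        rw [List.getLast?_eq_getLast hne, Option.mem_def, Option.some.injEq] at ha
        subst ha
        intro h
        exact hlast (by rw [h, hι])
      · intro k hk
        rw [List.getElem?_append_left (by omega : k < l.length)]
        exact hagree k (Nat.lt_succ_of_lt hk)
      · simp [act, List.foldl_append]
  exact closure_mono hsub (image_closure_subset_closure_image (hcont s) ⟨y, hy', rfl⟩)
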